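/- Let n ≥ 5 be odd, let u, v be vertices of the regular tournament T_reg on n vertices with u ≻ v in T_reg, and let T_reg^{u,v} be the tournament obtained from T_reg by reversing the edge between u and v (so that v ≻ u). Then u does not belong to the Slater set of T_reg^{u,v}. -/

import Mathlib

open scoped Classical

variable {V : Type*}

/-- A tournament: an irreflexive relation such that for distinct `u, v`
exactly one of `r u v` and `r v u` holds. -/
def IsTournament (r : V → V → Prop) : Prop :=
  (∀ v, ¬ r v v) ∧ ∀ u v : V, u ≠ v → (r u v ↔ ¬ r v u)

/-- The regular tournament on `Fin n` (for odd `n`): vertex `i` dominates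
`i + k (mod n)` for every `k` with `1 ≤ k ≤ (n-1)/2` (i.e. `2 * k ≤ n - 1`). -/
def regRel (n : ℕ) [NeZero n] : Fin n → Fin n → Prop :=
  fun i j => ∃ k : ℕ, 1 ≤ k ∧ 2 * k ≤ n - 1 ∧ j = i + Fin.ofNat n k

/-- The tournament obtained from `r` by reversing the edge from `u` to `v`
(so that afterwards `v` dominates `u`). -/
def reverseEdge (r : V → V → Prop) (u v : V) : V → V → Prop :=
  fun a b => (a = v ∧ b = u) ∨ (r a b ∧ ¬(a = u ∧ b = v))

/-- The Slater score of a strict order `s` w.r.t. the dominance relation `r`. -/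
noncomputable def slaterScore (r s : V → V → Prop) : ℕ :=
  {p : V × V | s p.1 p.2 ∧ r p.1 p.2}.ncard

/-- `s` is a Slater order for the tournament `r`: a strict total order of maximum Slater score. -/
def IsSlaterOrder (r s : V → V → Prop) : Prop :=
  IsStrictTotalOrder V s ∧
    ∀ s' : V → V → Prop, IsStrictTotalOrder V s' → slaterScore r s' ≤ slaterScore r s

/-- The Slater set: maximum elements of Slater orders. -/
def slaterSet (r : V → V → Prop) : Set V :=
  {m | ∃ s : V → V → Prop, IsSlaterOrder r s ∧ ∀ x, x ≠ m → s m x}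

section Aux
variable {n : ℕ} [NeZero n]

lemma regRel_iff {i j : Fin n} :
    regRel n i j ↔ 1 ≤ (j - i).val ∧ 2 * (j - i).val ≤ n - 1 := by
  have hn : 0 < n := Nat.pos_of_ne_zero (NeZero.ne n)
  constructor
  · rintro ⟨k, hk1, hk2, rfl⟩
    have hkn : k < n := by omega
    have h : i + Fin.ofNat n k - i = Fin.ofNat n k := by abel
    rw [h, Fin.val_ofNat, Nat.mod_eq_of_lt hkn]
    exact ⟨hk1, hk2⟩
  · rintro ⟨h1, h2⟩
    refine ⟨(j - i).val, h1, h2, ?_⟩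
    rw [Fin.ofNat_val_eq_self]
    abel

lemma val_sub_add {i j : Fin n} (h : i ≠ j) : (j - i).val + (i - j).val = n := by
  have hn : 0 < n := Nat.pos_of_ne_zero (NeZero.ne n)
  have h0 : (j - i) + (i - j) = 0 := by abel
  have hval := congrArg Fin.val h0
  rw [Fin.val_add] at hval
  simp at hval
  have hne : (j - i) ≠ 0 := sub_ne_zero.mpr (Ne.symm h)
  have hx : (j - i).val ≠ 0 := fun h0 => hne (Fin.val_injective (by simpa using h0))
  have hlt1 : (j - i).val < n := (j - i).isLt
  have hlt2 : (i - j).val < n := (i - j).isLt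
  have hdvd : n ∣ (j - i).val + (i - j).val := Nat.dvd_of_mod_eq_zero hval
  obtain ⟨c, hc⟩ := hdvd
  rcases c with _ | _ | c
  · omega
  · omega
  · have h2 : n * 2 ≤ n * (c + 1 + 1) := Nat.mul_le_mul_left n (by omega)
    omega
end Aux

section Aux2
variable {n : ℕ} [NeZero n]

lemma regRel_tournament (hodd : Odd n) : IsTournament (regRel n) := by
  obtain ⟨m, hm⟩ := hodd
  constructor
  · intro i hi
    rw [regRel_iff] at hi
    simp at hi
  · intro a b hab
    rw [regRel_iff, regRel_iff]
    have hsum := val_sub_add hab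
    have hne : (b - a) ≠ 0 := sub_ne_zero.mpr (Ne.symm hab)
    have hx : (b - a).val ≠ 0 := fun h0 => hne (Fin.val_injective (by simpa using h0))
    have hlt1 : (b - a).val < n := (b - a).isLt
    omega

lemma reverseEdge_tournament {V : Type*} {r : V → V → Prop} (h : IsTournament r) {u v : V}
    (huv : r u v) (hne : u ≠ v) : IsTournament (reverseEdge r u v) := by
  obtain ⟨hirr, htot⟩ := h
  constructor
  · rintro a (⟨rfl, h2⟩ | ⟨hr, -⟩)
    · exact hne h2.symm
    · exact hirr _ hr
  · intro a b hab
    have H := htot a b hab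
    have H' := htot b a (Ne.symm hab)
    by_cases h1 : a = u ∧ b = v
    · obtain ⟨rfl, rfl⟩ := h1
      constructor
      · rintro (⟨hav, -⟩ | ⟨-, hn2⟩)
        · exact absurd hav hne
        · exact absurd ⟨rfl, rfl⟩ hn2
      · intro hcon
        exact absurd (Or.inl ⟨rfl, rfl⟩) hcon
    · by_cases h2 : a = v ∧ b = u
      · obtain ⟨rfl, rfl⟩ := h2
        constructor
        · rintro - (⟨hbv, -⟩ | ⟨-, hn2⟩)
          · exact hne hbv
          · exact hn2 ⟨rfl, rfl⟩
        · intro _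
          exact Or.inl ⟨rfl, rfl⟩
      · have e1 : reverseEdge r u v a b ↔ r a b := by
          constructor
          · rintro (⟨hav, hbu⟩ | ⟨hr, -⟩)
            · exact absurd ⟨hav, hbu⟩ h2
            · exact hr
          · intro hr
            exact Or.inr ⟨hr, h1⟩
        have e2 : reverseEdge r u v b a ↔ r b a := by
          constructor
          · rintro (⟨hbv, hau⟩ | ⟨hr, -⟩)
            · exact absurd ⟨hau, hbv⟩ h1
            · exact hr
          · intro hr
            exact Or.inr ⟨hr, fun hh => h2 ⟨hh.2, hh.1⟩⟩
        rw [e1, e2]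
        exact H
end Aux2

section Aux3
variable {n : ℕ} [NeZero n]

lemma out_card {m : ℕ} (hm : n = 2 * m + 1) (u : Fin n) :
    {y : Fin n | regRel n u y}.ncard = m := by
  have hset : {y : Fin n | regRel n u y}
      = (fun d : Fin n => u + d) '' {d : Fin n | 1 ≤ d.val ∧ d.val ≤ m} := by
    ext y
    simp only [Set.mem_setOf_eq, Set.mem_image, regRel_iff]
    constructor
    · rintro ⟨h1, h2⟩
      exact ⟨y - u, ⟨h1, by omega⟩, by abel⟩
    · rintro ⟨d, ⟨hd1, hd2⟩, rfl⟩
      have h : u + d - u = d := by abel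
      rw [h]
      omega
  rw [hset, Set.ncard_image_of_injective _ (add_right_injective u)]
  have hval : Fin.val '' {d : Fin n | 1 ≤ d.val ∧ d.val ≤ m} = Set.Icc 1 m := by
    ext k
    constructor
    · rintro ⟨d, ⟨h1, h2⟩, rfl⟩
      exact ⟨h1, h2⟩
    · rintro ⟨h1, h2⟩
      exact ⟨⟨k, by omega⟩, ⟨h1, h2⟩, rfl⟩
  have h2 := Set.ncard_image_of_injective {d : Fin n | 1 ≤ d.val ∧ d.val ≤ m} Fin.val_injective
  rw [hval] at h2
  rw [← h2, ← Finset.coe_Icc, Set.ncard_coe_finset, Nat.card_Icc]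
  omega

variable {α : Type*} [Fintype α]

lemma score_top (r s : α → α → Prop) (u : α) (hsirr : ∀ x, ¬ s x x)
    (hsasym : ∀ a b, s a b → ¬ s b a)
    (hrirr : ∀ x, ¬ r x x) (htop : ∀ x, x ≠ u → s u x) :
    slaterScore r s
      = {p : α × α | p.1 ≠ u ∧ p.2 ≠ u ∧ s p.1 p.2 ∧ r p.1 p.2}.ncard
        + {y | r u y}.ncard := by
  have hset : {p : α × α | s p.1 p.2 ∧ r p.1 p.2}
      = {p : α × α | p.1 ≠ u ∧ p.2 ≠ u ∧ s p.1 p.2 ∧ r p.1 p.2}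
        ∪ (Prod.mk u '' {y | r u y}) := by
    ext ⟨a, b⟩
    simp only [Set.mem_setOf_eq, Set.mem_union, Set.mem_image]
    constructor
    · rintro ⟨hs, hr⟩
      by_cases ha : a = u
      · subst ha
        exact Or.inr ⟨b, hr, rfl⟩
      · have hb : b ≠ u := by
          rintro rfl
          exact hsasym _ _ hs (htop a ha)
        exact Or.inl ⟨ha, hb, hs, hr⟩
    · rintro (⟨-, -, hs, hr⟩ | ⟨y, hy, heq⟩)
      · exact ⟨hs, hr⟩
      · obtain ⟨h1, h2⟩ := Prod.ext_iff.mp heq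
        subst h1
        subst h2
        have hyu : y ≠ u := fun h => hrirr u (h ▸ hy)
        exact ⟨htop y hyu, hy⟩
  have hdisj : Disjoint {p : α × α | p.1 ≠ u ∧ p.2 ≠ u ∧ s p.1 p.2 ∧ r p.1 p.2}
      (Prod.mk u '' {y | r u y}) := by
    rw [Set.disjoint_left]
    rintro ⟨a, b⟩ ⟨ha, -⟩ ⟨y, -, heq⟩
    exact ha (Prod.ext_iff.mp heq).1.symm
  have hinj : Function.Injective (Prod.mk u : α → α × α) :=
    fun x y h => (Prod.ext_iff.mp h).2
  rw [slaterScore, hset, Set.ncard_union_eq hdisj (Set.toFinite _) (Set.toFinite _),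
    Set.ncard_image_of_injective _ hinj]

lemma score_bot (r s : α → α → Prop) (u : α) (hsirr : ∀ x, ¬ s x x)
    (hsasym : ∀ a b, s a b → ¬ s b a)
    (hrirr : ∀ x, ¬ r x x) (hbot : ∀ x, x ≠ u → s x u) :
    slaterScore r s
      = {p : α × α | p.1 ≠ u ∧ p.2 ≠ u ∧ s p.1 p.2 ∧ r p.1 p.2}.ncard
        + {x | r x u}.ncard := by
  have hset : {p : α × α | s p.1 p.2 ∧ r p.1 p.2}
      = {p : α × α | p.1 ≠ u ∧ p.2 ≠ u ∧ s p.1 p.2 ∧ r p.1 p.2}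
        ∪ ((fun x => (x, u)) '' {x | r x u}) := by
    ext ⟨a, b⟩
    simp only [Set.mem_setOf_eq, Set.mem_union, Set.mem_image]
    constructor
    · rintro ⟨hs, hr⟩
      by_cases hb : b = u
      · subst hb
        exact Or.inr ⟨a, hr, rfl⟩
      · have ha : a ≠ u := by
          rintro rfl
          exact hsasym _ _ hs (hbot b hb)
        exact Or.inl ⟨ha, hb, hs, hr⟩
    · rintro (⟨-, -, hs, hr⟩ | ⟨x, hx, heq⟩)
      · exact ⟨hs, hr⟩
      · obtain ⟨h1, h2⟩ := Prod.ext_iff.mp heq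
        subst h1
        subst h2
        have hxu : x ≠ u := fun h => hrirr u (h ▸ hx)
        exact ⟨hbot x hxu, hx⟩
  have hdisj : Disjoint {p : α × α | p.1 ≠ u ∧ p.2 ≠ u ∧ s p.1 p.2 ∧ r p.1 p.2}
      ((fun x => (x, u)) '' {x | r x u}) := by
    rw [Set.disjoint_left]
    rintro ⟨a, b⟩ ⟨-, hb, -⟩ ⟨x, -, heq⟩
    exact hb (Prod.ext_iff.mp heq).2.symm
  have hinj : Function.Injective (fun x : α => (x, u)) :=
    fun x y h => (Prod.ext_iff.mp h).1
  rw [slaterScore, hset, Set.ncard_union_eq hdisj (Set.toFinite _) (Set.toFinite _),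
    Set.ncard_image_of_injective _ hinj]
end Aux3


/-- for odd `n ≥ 5`, if the edge from `u` to `v` of the regular
tournament is reversed, then `u` is not in the Slater set of the resulting tournament. -/
theorem slater_reversed_regular (n : ℕ) [NeZero n] (hodd : Odd n) (hn : 5 ≤ n)
    (u v : Fin n) (huv : regRel n u v) :
    u ∉ slaterSet (reverseEdge (regRel n) u v) := by
  obtain ⟨m, hm⟩ := hodd
  have hm2 : 2 ≤ m := by omega
  rintro ⟨s, ⟨hsto, hmax⟩, htop⟩
  have hTreg : IsTournament (regRel n) := regRel_tournament ⟨m, hm⟩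
  have hune : u ≠ v := fun h => hTreg.1 u (h ▸ huv)
  have hT' : IsTournament (reverseEdge (regRel n) u v) :=
    reverseEdge_tournament hTreg huv hune
  set r' := reverseEdge (regRel n) u v with hr'def
  have hsirr : ∀ x, ¬ s x x := fun x => hsto.irrefl x
  have hsasym : ∀ a b, s a b → ¬ s b a :=
    fun a b hab hba => hsto.irrefl a (hsto.trans _ _ _ hab hba)
  -- the modified order with u at the bottom
  set s' : Fin n → Fin n → Prop :=
    fun a b => (b = u ∧ a ≠ u) ∨ (a ≠ u ∧ b ≠ u ∧ s a b) with hs'def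
  have hs'irr : ∀ x, ¬ s' x x := by
    rintro x (⟨h1, h2⟩ | ⟨-, -, hss⟩)
    · exact h2 h1
    · exact hsirr x hss
  have hs'trans : ∀ a b c, s' a b → s' b c → s' a c := by
    rintro a b c (⟨hbu, hau⟩ | ⟨hau, hbu, hab⟩) (⟨hcu, hbu'⟩ | ⟨hbu', hcu, hbc⟩)
    · exact absurd hbu hbu'
    · exact absurd hbu hbu'
    · exact Or.inl ⟨hcu, hau⟩
    · exact Or.inr ⟨hau, hcu, hsto.trans _ _ _ hab hbc⟩
  have hsto' : IsStrictTotalOrder (Fin n) s' := by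
    refine { trichotomous := ?_, irrefl := hs'irr, trans := hs'trans }
    intro a b hab hba
    suffices H : s' a b ∨ a = b ∨ s' b a from H.elim (absurd · hab) (·.elim id (absurd · hba))
    by_cases ha : a = u
    · by_cases hb : b = u
      · exact Or.inr (Or.inl (ha.trans hb.symm))
      · exact Or.inr (Or.inr (Or.inl ⟨ha, hb⟩))
    · by_cases hb : b = u
      · exact Or.inl (Or.inl ⟨hb, ha⟩)
      · rcases @trichotomous _ s hsto.toTrichotomous a b with h | h | h
        · exact Or.inl (Or.inr ⟨ha, hb, h⟩)
        · exact Or.inr (Or.inl h)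
        · exact Or.inr (Or.inr (Or.inr ⟨hb, ha, h⟩))
  have hs'asym : ∀ a b, s' a b → ¬ s' b a :=
    fun a b hab hba => hs'irr a (hs'trans _ _ _ hab hba)
  have hs'bot : ∀ x, x ≠ u → s' x u := fun x hx => Or.inl ⟨rfl, hx⟩
  -- score decompositions
  have hsc1 := score_top r' s u hsirr hsasym hT'.1 htop
  have hsc2 := score_bot r' s' u hs'irr hs'asym hT'.1 hs'bot
  -- the common part coincides
  have hA : {p : Fin n × Fin n | p.1 ≠ u ∧ p.2 ≠ u ∧ s' p.1 p.2 ∧ r' p.1 p.2}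
      = {p : Fin n × Fin n | p.1 ≠ u ∧ p.2 ≠ u ∧ s p.1 p.2 ∧ r' p.1 p.2} := by
    ext ⟨a, b⟩
    simp only [Set.mem_setOf_eq]
    constructor
    · rintro ⟨ha, hb, (⟨hbu, -⟩ | ⟨-, -, hs⟩), hr⟩
      · exact absurd hbu hb
      · exact ⟨ha, hb, hs, hr⟩
    · rintro ⟨ha, hb, hs, hr⟩
      exact ⟨ha, hb, Or.inr ⟨ha, hb, hs⟩, hr⟩
  -- out-neighbours of u in r'
  have hOutset : {y : Fin n | r' u y} = {y : Fin n | regRel n u y} \ {v} := by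
    ext y
    simp only [Set.mem_setOf_eq, Set.mem_diff, Set.mem_singleton_iff, hr'def, reverseEdge]
    constructor
    · rintro (⟨huv', -⟩ | ⟨hr, hn2⟩)
      · exact absurd huv' hune
      · exact ⟨hr, fun h => hn2 ⟨by trivial, h⟩⟩
    · rintro ⟨hr, hyv⟩
      exact Or.inr ⟨hr, fun hh => hyv hh.2⟩
  have hOutcard : {y : Fin n | r' u y}.ncard = m - 1 := by
    rw [hOutset, Set.ncard_diff_singleton_of_mem (show v ∈ {y : Fin n | regRel n u y} from huv), out_card hm u]
  -- in-neighbours of u in r'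
  have hInset : {x : Fin n | r' x u} = ({u} ∪ {y : Fin n | r' u y})ᶜ := by
    ext x
    simp only [Set.mem_setOf_eq, Set.mem_compl_iff, Set.mem_union, Set.mem_singleton_iff]
    by_cases hx : x = u
    · subst hx
      simp only [true_or, not_true_eq_false, iff_false]
      exact hT'.1 x
    · rw [hT'.2 x u hx]
      constructor
      · intro h hh
        rcases hh with h1 | h2
        · exact hx h1
        · exact h h2
      · intro h hh
        exact h (Or.inr hh)
  have huOut : u ∉ {y : Fin n | r' u y} := hT'.1 u
  have hIncard : {x : Fin n | r' x u}.ncard = m + 1 := by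
    have hcompl := Set.ncard_add_ncard_compl ({u} ∪ {y : Fin n | r' u y})
      (Set.toFinite _) (Set.toFinite _)
    have hunion : ({u} ∪ {y : Fin n | r' u y}).ncard = 1 + (m - 1) := by
      rw [Set.ncard_union_eq (Set.disjoint_singleton_left.mpr huOut)
        (Set.toFinite _) (Set.toFinite _), Set.ncard_singleton, hOutcard]
    have hcard : Nat.card (Fin n) = n := by
      rw [Nat.card_eq_fintype_card, Fintype.card_fin]
    rw [hInset]
    omega
  have hle := hmax s' hsto'
  rw [hsc1, hsc2, hA, hOutcard, hIncard] at hle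
  omega
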